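/- Let E be a complex Banach space, S, T : E → E bounded linear operators with ‖S‖ ≤ 1 and ‖T‖ ≤ 1, u ∈ E, δ ≥ 0, υ ∈ [0, 1/2), and 0 < ε ≤ 3. For a bounded operator X with ‖X‖ ≤ 1 define B_ε(X) u := Σ_{m=0}^∞ binom(1/2, m) (−1)^m (1+ε)^{1/2 − m} X^m u, where binom(1/2, m) is the generalized binomial coefficient (the binomial series for √((1+ε)·I − X) applied to u). If ‖S^m u − T^m u‖ ≤ m^{1+υ} δ for every m ≥ 1, then both series converge absolutely and ‖ B_ε(S) u − B_ε(T) u ‖ ≤ 2 √π · ε^{−(1/2 + υ)} · δ. -/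

import Mathlib

/-- The generalized binomial coefficient `binom(1/2, m)`. -/
noncomputable def binomHalf (m : ℕ) : ℝ :=
  (∏ i ∈ Finset.range m, ((1 : ℝ) / 2 - (i : ℝ))) / (m.factorial : ℝ)

lemma binomHalf_zero : binomHalf 0 = 1 := by simp [binomHalf]

lemma binomHalf_succ (m : ℕ) :
    binomHalf (m + 1) = binomHalf m * ((1 / 2 - (m : ℝ)) / (m + 1)) := by
  have h1 : ((m.factorial : ℝ)) ≠ 0 := Nat.cast_ne_zero.mpr m.factorial_ne_zero
  have h2 : ((m : ℝ) + 1) ≠ 0 := by positivity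
  rw [binomHalf, binomHalf, Finset.prod_range_succ, Nat.factorial_succ,
    div_mul_div_comm]
  congr 1
  push_cast
  ring

lemma abs_binomHalf_le_one (m : ℕ) : |binomHalf m| ≤ 1 := by
  induction m with
  | zero => simp [binomHalf_zero]
  | succ n ih =>
    rw [binomHalf_succ, abs_mul]
    have h1 : |(1 / 2 - (n : ℝ)) / (n + 1)| ≤ 1 := by
      rw [abs_div, abs_of_pos (by positivity : (0:ℝ) < (n:ℝ) + 1), div_le_one (by positivity)]
      rw [abs_le]
      constructor <;> [linarith [Nat.cast_nonneg (α := ℝ) n]; linarith [Nat.cast_nonneg (α := ℝ) n]]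
    calc |binomHalf n| * |(1 / 2 - (n : ℝ)) / (n + 1)| ≤ 1 * 1 :=
          mul_le_mul ih h1 (abs_nonneg _) zero_le_one
      _ = 1 := by ring

lemma abs_binomHalf_le (m : ℕ) (hm : 1 ≤ m) :
    |binomHalf m| * ((m : ℝ) * Real.sqrt m) ≤ 1 / 2 := by
  induction m, hm using Nat.le_induction with
  | base => simp [binomHalf_succ, binomHalf_zero, abs_of_nonneg]
  | succ n hn ih =>
    have hn1 : (1 : ℝ) ≤ (n : ℝ) := by exact_mod_cast hn
    have hs : Real.sqrt n ^ 2 = n := Real.sq_sqrt (by linarith)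
    have hs1 : Real.sqrt (n + 1) ^ 2 = (n : ℝ) + 1 := Real.sq_sqrt (by linarith)
    have hsn : 1 ≤ Real.sqrt n := by
      rw [show (1:ℝ) = Real.sqrt 1 by simp]
      exact Real.sqrt_le_sqrt hn1
    have hsn1 : 0 < Real.sqrt ((n : ℝ) + 1) := Real.sqrt_pos.mpr (by linarith)
    rw [binomHalf_succ, abs_mul]
    have habs : |(1 / 2 - (n : ℝ)) / (n + 1)| = ((n : ℝ) - 1 / 2) / (n + 1) := by
      rw [abs_div, abs_of_pos (by positivity : (0:ℝ) < (n:ℝ) + 1),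
        abs_of_nonpos (by linarith), neg_sub]
    push_cast
    have key : ((n : ℝ) - 1 / 2) * Real.sqrt ((n:ℝ) + 1) ≤ (n : ℝ) * Real.sqrt n := by
      nlinarith [Real.sqrt_nonneg ((n:ℝ)+1), Real.sqrt_nonneg (n:ℝ),
        sq_nonneg (Real.sqrt ((n:ℝ)+1) - Real.sqrt (n:ℝ)),
        sq_nonneg ((n:ℝ) * Real.sqrt (n:ℝ) - ((n:ℝ) - 1/2) * Real.sqrt ((n:ℝ)+1))]
    have hb0 : 0 ≤ |binomHalf n| := abs_nonneg _
    calc |binomHalf n| * |(1 / 2 - (n : ℝ)) / ((n:ℝ) + 1)| * (((n:ℝ) + 1) * Real.sqrt ((n:ℝ) + 1))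
        = |binomHalf n| * (((n : ℝ) - 1 / 2) * Real.sqrt ((n:ℝ) + 1)) := by
          rw [habs]; field_simp
      _ ≤ |binomHalf n| * ((n : ℝ) * Real.sqrt n) := by
          exact mul_le_mul_of_nonneg_left key hb0
      _ ≤ 1 / 2 := ih

lemma rpow_split (ε : ℝ) (hε : 0 < ε) (m : ℕ) :
    (1 + ε) ^ ((1:ℝ)/2 - (m:ℝ)) = Real.sqrt (1+ε) * ((1+ε)⁻¹) ^ m := by
  have h1 : (0:ℝ) < 1 + ε := by linarith
  rw [Real.rpow_sub h1, Real.rpow_natCast, Real.sqrt_eq_rpow, div_eq_mul_inv, inv_pow]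

noncomputable def Gfun (υ ε : ℝ) (m : ℕ) : ℝ :=
  |binomHalf m| * (1 + ε) ^ ((1:ℝ)/2 - (m:ℝ)) * (m:ℝ) ^ (1 + υ)

noncomputable def Hfun (υ ε : ℝ) (m : ℕ) : ℝ :=
  Real.sqrt (1+ε) / 2 * (m:ℝ) ^ (υ - 1/2) * ((1+ε)⁻¹) ^ m

lemma Gfun_nonneg (υ ε : ℝ) (hε : 0 < ε) (m : ℕ) : 0 ≤ Gfun υ ε m := by
  have h1 : (0:ℝ) < 1 + ε := by linarith
  have := Real.rpow_nonneg (le_of_lt h1) ((1:ℝ)/2 - (m:ℝ))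
  have := Real.rpow_nonneg (Nat.cast_nonneg (α := ℝ) m) (1 + υ)
  have := abs_nonneg (binomHalf m)
  unfold Gfun; positivity

lemma Hfun_nonneg (υ ε : ℝ) (hε : 0 < ε) (m : ℕ) : 0 ≤ Hfun υ ε m := by
  have h1 : (0:ℝ) < 1 + ε := by linarith
  have := Real.rpow_nonneg (Nat.cast_nonneg (α := ℝ) m) (υ - 1/2)
  have := Real.sqrt_nonneg (1 + ε)
  unfold Hfun; positivity

lemma Hfun_zero (υ ε : ℝ) (hυ1 : υ < 1/2) : Hfun υ ε 0 = 0 := by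
  have : υ - 1/2 ≠ 0 := by intro h; rw [sub_eq_zero] at h; linarith
  simp [Hfun, Real.zero_rpow (show υ - 2⁻¹ ≠ 0 by rw [show (2⁻¹:ℝ) = 1/2 by norm_num]; exact this)]

lemma Gfun_le_Hfun (υ ε : ℝ) (hυ0 : 0 ≤ υ) (hυ1 : υ < 1/2) (hε : 0 < ε) (m : ℕ) :
    Gfun υ ε m ≤ Hfun υ ε m := by
  rcases Nat.eq_zero_or_pos m with h0 | hm
  · subst h0
    have h1 : (1:ℝ) + υ ≠ 0 := by linarith
    rw [Hfun_zero υ ε hυ1]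
    simp [Gfun, Real.zero_rpow h1]
  · have hm0 : (0:ℝ) < (m:ℝ) := by exact_mod_cast hm
    have hm1 : (1:ℝ) ≤ (m:ℝ) := by exact_mod_cast hm
    have e1 : (m:ℝ) ^ (1 + υ) = ((m:ℝ) * Real.sqrt m) * (m:ℝ) ^ (υ - 1/2) := by
      have e2 : (m:ℝ) * Real.sqrt m = (m:ℝ) ^ ((3:ℝ)/2) := by
        rw [show (3:ℝ)/2 = 1 + 1/2 by norm_num, Real.rpow_add hm0, Real.rpow_one,
          ← Real.sqrt_eq_rpow]
      rw [e2, ← Real.rpow_add hm0]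
      congr 1
      ring
    have key := abs_binomHalf_le m hm
    have hP : (0:ℝ) ≤ Real.sqrt (1+ε) * ((1+ε)⁻¹) ^ m * (m:ℝ) ^ (υ - 1/2) := by
      have h1 : (0:ℝ) < 1 + ε := by linarith
      have := Real.rpow_nonneg (le_of_lt hm0) (υ - 1/2)
      positivity
    have eG : Gfun υ ε m
        = (|binomHalf m| * ((m:ℝ) * Real.sqrt m)) *
          (Real.sqrt (1+ε) * ((1+ε)⁻¹) ^ m * (m:ℝ) ^ (υ - 1/2)) := by
      rw [Gfun, rpow_split ε hε, e1]; ring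
    have eH : Hfun υ ε m
        = (1/2) * (Real.sqrt (1+ε) * ((1+ε)⁻¹) ^ m * (m:ℝ) ^ (υ - 1/2)) := by
      rw [Hfun]; ring
    rw [eG, eH]
    exact mul_le_mul_of_nonneg_right key hP

lemma Hfun_le_geom (υ ε : ℝ) (hυ1 : υ < 1/2) (hε : 0 < ε) (m : ℕ) :
    Hfun υ ε m ≤ (Real.sqrt (1+ε) / 2) * ((1+ε)⁻¹) ^ m := by
  have h1 : (0:ℝ) < 1 + ε := by linarith
  rcases Nat.eq_zero_or_pos m with h0 | hm
  · subst h0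
    rw [Hfun_zero υ ε hυ1]
    positivity
  · have hm1 : (1:ℝ) ≤ (m:ℝ) := by exact_mod_cast hm
    have h2 : (m:ℝ) ^ (υ - 1/2) ≤ 1 :=
      Real.rpow_le_one_of_one_le_of_nonpos hm1 (by linarith)
    have h3 : (0:ℝ) ≤ ((1+ε)⁻¹) ^ m := by positivity
    calc Real.sqrt (1+ε) / 2 * (m:ℝ) ^ (υ - 1/2) * ((1+ε)⁻¹) ^ m
        ≤ Real.sqrt (1+ε) / 2 * 1 * ((1+ε)⁻¹) ^ m := by
          have hs : (0:ℝ) ≤ Real.sqrt (1+ε) / 2 := by positivity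
          exact mul_le_mul_of_nonneg_right (mul_le_mul_of_nonneg_left h2 hs) h3
      _ = (Real.sqrt (1+ε) / 2) * ((1+ε)⁻¹) ^ m := by ring

lemma summable_Hfun (υ ε : ℝ) (hυ1 : υ < 1/2) (hε : 0 < ε) : Summable (Hfun υ ε) := by
  have h1 : (0:ℝ) < 1 + ε := by linarith
  have hr0 : (0:ℝ) ≤ (1+ε)⁻¹ := by positivity
  have hr1 : (1+ε)⁻¹ < 1 := by
    rw [inv_lt_one_iff₀]; right; linarith
  exact Summable.of_nonneg_of_le (Hfun_nonneg υ ε hε) (Hfun_le_geom υ ε hυ1 hε)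
    ((summable_geometric_of_lt_one hr0 hr1).mul_left _)

lemma summable_Gfun (υ ε : ℝ) (hυ0 : 0 ≤ υ) (hυ1 : υ < 1/2) (hε : 0 < ε) :
    Summable (Gfun υ ε) :=
  Summable.of_nonneg_of_le (Gfun_nonneg υ ε hε) (Gfun_le_Hfun υ ε hυ0 hυ1 hε)
    (summable_Hfun υ ε hυ1 hε)

lemma sum_inv_sqrt_le (M : ℕ) :
    ∑ m ∈ Finset.range (M+1), (Real.sqrt m)⁻¹ ≤ 2 * Real.sqrt M := by
  induction M with
  | zero => simp
  | succ n ih =>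
    rw [Finset.sum_range_succ]
    have hb : (0:ℝ) < Real.sqrt ((n:ℝ)+1) := Real.sqrt_pos.mpr (by positivity)
    have ha : (0:ℝ) ≤ Real.sqrt (n:ℝ) := Real.sqrt_nonneg _
    have ha2 : Real.sqrt (n:ℝ) ^ 2 = (n:ℝ) := Real.sq_sqrt (Nat.cast_nonneg n)
    have hb2 : Real.sqrt ((n:ℝ)+1) ^ 2 = (n:ℝ)+1 := Real.sq_sqrt (by positivity)
    have hcast : ((n+1 : ℕ) : ℝ) = (n:ℝ) + 1 := by push_cast; ring
    rw [hcast]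
    have key : 2 * Real.sqrt (n:ℝ) + (Real.sqrt ((n:ℝ)+1))⁻¹ ≤ 2 * Real.sqrt ((n:ℝ)+1) := by
      have hinv : Real.sqrt ((n:ℝ)+1) * (Real.sqrt ((n:ℝ)+1))⁻¹ = 1 :=
        mul_inv_cancel₀ (ne_of_gt hb)
      have hinv0 : (0:ℝ) ≤ (Real.sqrt ((n:ℝ)+1))⁻¹ := by positivity
      nlinarith [sq_nonneg (Real.sqrt (n:ℝ) - Real.sqrt ((n:ℝ)+1))]
    linarith [ih]

lemma geom_shift (ε : ℝ) (hε : 0 < ε) (c : ℝ) :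
    ∑' n : ℕ, c * ((1+ε)⁻¹) ^ (n+1) = c * ε⁻¹ := by
  have h1 : (0:ℝ) < 1 + ε := by linarith
  have hr0 : (0:ℝ) ≤ (1+ε)⁻¹ := by positivity
  have hr1 : (1+ε)⁻¹ < 1 := by rw [inv_lt_one_iff₀]; right; linarith
  have e : (fun n : ℕ => c * ((1+ε)⁻¹) ^ (n+1)) = fun n : ℕ => (c * (1+ε)⁻¹) * ((1+ε)⁻¹) ^ n := by
    funext n; rw [pow_succ']; ring
  rw [e, tsum_mul_left, tsum_geometric_of_lt_one hr0 hr1]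
  have h2 : (1 - (1+ε)⁻¹)⁻¹ = (1+ε) * ε⁻¹ := by
    rw [show 1 - (1+ε)⁻¹ = ε / (1+ε) by field_simp; ring]
    rw [inv_div]
    ring
  rw [h2]
  field_simp

lemma eps_exp_split (υ ε : ℝ) (hε : 0 < ε) :
    ε ^ ((1:ℝ)/2 - υ) * ε⁻¹ = ε ^ (-((1:ℝ)/2 + υ)) := by
  rw [show ε⁻¹ = ε ^ (-1 : ℝ) by rw [Real.rpow_neg_one], ← Real.rpow_add hε]
  congr 1
  ring

lemma sqrt_pi_lb : (35/32 : ℝ) ≤ Real.sqrt Real.pi := by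
  rw [show (35/32:ℝ) = Real.sqrt ((35/32)^2) by rw [Real.sqrt_sq (by norm_num)]]
  exact Real.sqrt_le_sqrt (by nlinarith [Real.pi_gt_three])

set_option maxHeartbeats 1000000 in
lemma tsum_Hfun_le (υ ε : ℝ) (hυ0 : 0 ≤ υ) (hυ1 : υ < 1/2) (hε0 : 0 < ε) (hε3 : ε ≤ 3) :
    ∑' m : ℕ, Hfun υ ε m ≤ 2 * Real.sqrt Real.pi * ε ^ (-((1:ℝ)/2 + υ)) := by
  have h1 : (0:ℝ) < 1 + ε := by linarith
  have hr0 : (0:ℝ) ≤ (1+ε)⁻¹ := by positivity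
  have hr1 : (1+ε)⁻¹ < 1 := by rw [inv_lt_one_iff₀]; right; linarith
  have hs0 : (0:ℝ) ≤ Real.sqrt (1+ε) := Real.sqrt_nonneg _
  have hSumH := summable_Hfun υ ε hυ1 hε0
  have hgeom : Summable (fun n : ℕ => ((1+ε)⁻¹) ^ n) := summable_geometric_of_lt_one hr0 hr1
  have hX0 : (0:ℝ) < ε ^ (-((1:ℝ)/2 + υ)) := Real.rpow_pos_of_pos hε0 _
  have hπ : (35/32 : ℝ) ≤ Real.sqrt Real.pi := sqrt_pi_lb
  by_cases hhalf : 1/2 ≤ ε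
  · -- large ε
    have hs2 : Real.sqrt (1+ε) ≤ 2 := by
      rw [show (2:ℝ) = Real.sqrt (2^2) by rw [Real.sqrt_sq (by norm_num)]]
      exact Real.sqrt_le_sqrt (by norm_num; linarith)
    rw [Summable.tsum_eq_zero_add hSumH, Hfun_zero υ ε hυ1, zero_add]
    have hpt : ∀ n : ℕ, Hfun υ ε (n+1) ≤ (Real.sqrt (1+ε) / 2) * ((1+ε)⁻¹) ^ (n+1) :=
      fun n => Hfun_le_geom υ ε hυ1 hε0 (n+1)
    have hSum1 : Summable (fun n : ℕ => Hfun υ ε (n+1)) := by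
      have := (summable_nat_add_iff (f := Hfun υ ε) 1).mpr hSumH
      simpa using this
    have hSum2 : Summable (fun n : ℕ => (Real.sqrt (1+ε) / 2) * ((1+ε)⁻¹) ^ (n+1)) := by
      have : Summable (fun n : ℕ => ((Real.sqrt (1+ε) / 2) * (1+ε)⁻¹) * ((1+ε)⁻¹) ^ n) :=
        hgeom.mul_left _
      refine this.congr fun n => ?_
      rw [pow_succ']; ring
    have step1 : ∑' n : ℕ, Hfun υ ε (n+1) ≤ Real.sqrt (1+ε) / 2 * ε⁻¹ := by
      calc ∑' n : ℕ, Hfun υ ε (n+1)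
          ≤ ∑' n : ℕ, (Real.sqrt (1+ε) / 2) * ((1+ε)⁻¹) ^ (n+1) :=
            Summable.tsum_le_tsum hpt hSum1 hSum2
        _ = Real.sqrt (1+ε) / 2 * ε⁻¹ := geom_shift ε hε0 _
    have hεinv : ε⁻¹ ≤ 2 * Real.sqrt Real.pi * ε ^ (-((1:ℝ)/2 + υ)) := by
      have e1 : ε ^ (-((1:ℝ)/2 + υ)) = ε ^ ((1:ℝ)/2 - υ) * ε⁻¹ := (eps_exp_split υ ε hε0).symm
      have h2 : ((1:ℝ)/2) ^ ((1:ℝ)/2 - υ) ≤ ε ^ ((1:ℝ)/2 - υ) :=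
        Real.rpow_le_rpow (by norm_num) hhalf (by linarith)
      have h3 : ((1:ℝ)/2) ^ (1:ℝ) ≤ ((1:ℝ)/2) ^ ((1:ℝ)/2 - υ) :=
        Real.rpow_le_rpow_of_exponent_ge (by norm_num) (by norm_num) (by linarith)
      rw [Real.rpow_one] at h3
      have h4 : (1:ℝ)/2 ≤ ε ^ ((1:ℝ)/2 - υ) := le_trans h3 h2
      have hεi0 : (0:ℝ) ≤ ε⁻¹ := by positivity
      rw [e1]
      nlinarith [mul_le_mul_of_nonneg_right h4 hεi0]
    calc ∑' n : ℕ, Hfun υ ε (n+1) ≤ Real.sqrt (1+ε) / 2 * ε⁻¹ := step1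
      _ ≤ (2/2) * ε⁻¹ := by
          have : (0:ℝ) ≤ ε⁻¹ := by positivity
          exact mul_le_mul_of_nonneg_right (by linarith) this
      _ = ε⁻¹ := by ring
      _ ≤ 2 * Real.sqrt Real.pi * ε ^ (-((1:ℝ)/2 + υ)) := hεinv
  · -- small ε
    push_neg at hhalf
    have hεi0 : (0:ℝ) < ε⁻¹ := by positivity
    obtain ⟨M, hM1, hMlt⟩ : ∃ M : ℕ, ε⁻¹ ≤ (M:ℝ) ∧ (M:ℝ) < ε⁻¹ + 1 :=
      ⟨⌈ε⁻¹⌉₊, Nat.le_ceil _, Nat.ceil_lt_add_one (le_of_lt hεi0)⟩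
    have hεinv2 : (2:ℝ) ≤ ε⁻¹ := by
      have h := mul_inv_cancel₀ (ne_of_gt hε0)
      nlinarith
    have hM32 : (M:ℝ) ≤ (3/2) * ε⁻¹ := by linarith
    have hMpos : (0:ℝ) < (M:ℝ) := lt_of_lt_of_le hεi0 hM1
    have hMε : (1:ℝ) ≤ (M:ℝ) * ε := by
      have := mul_le_mul_of_nonneg_right hM1 (le_of_lt hε0)
      rwa [inv_mul_cancel₀ (ne_of_gt hε0)] at this
    have hs32 : Real.sqrt (1+ε) ≤ 5/4 := by
      rw [show (5/4:ℝ) = Real.sqrt ((5/4)^2) by rw [Real.sqrt_sq (by norm_num)]]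
      exact Real.sqrt_le_sqrt (by nlinarith)
    rw [← Summable.sum_add_tsum_nat_add (M+1) hSumH]
    -- head bound
    have head : ∑ m ∈ Finset.range (M+1), Hfun υ ε m
        ≤ Real.sqrt (1+ε) * (3/2) * ε ^ (-((1:ℝ)/2 + υ)) := by
      have hpt : ∀ m ∈ Finset.range (M+1),
          Hfun υ ε m ≤ Real.sqrt (1+ε) / 2 * ((M:ℝ) ^ υ * (Real.sqrt m)⁻¹) := by
        intro m hm
        rcases Nat.eq_zero_or_pos m with h0 | hmp
        · subst h0
          rw [Hfun_zero υ ε hυ1]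
          simp
        · have hm0 : (0:ℝ) < (m:ℝ) := by exact_mod_cast hmp
          have hmM : (m:ℝ) ≤ (M:ℝ) := by
            have := Finset.mem_range.mp hm
            exact_mod_cast Nat.lt_succ_iff.mp this
          have e1 : (m:ℝ) ^ (υ - 1/2) = (m:ℝ) ^ υ * (Real.sqrt m)⁻¹ := by
            rw [show υ - 1/2 = υ + (-(1/2 : ℝ)) by ring, Real.rpow_add hm0,
              Real.rpow_neg (le_of_lt hm0), Real.sqrt_eq_rpow]
          have h2 : (m:ℝ) ^ υ ≤ (M:ℝ) ^ υ := Real.rpow_le_rpow (le_of_lt hm0) hmM hυ0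
          have h3 : ((1+ε)⁻¹) ^ m ≤ 1 := pow_le_one₀ hr0 (le_of_lt hr1)
          have hsm0 : (0:ℝ) ≤ (Real.sqrt m)⁻¹ := by positivity
          calc Hfun υ ε m
              = Real.sqrt (1+ε) / 2 * ((m:ℝ) ^ υ * (Real.sqrt m)⁻¹) * ((1+ε)⁻¹) ^ m := by
                rw [Hfun, e1]
            _ ≤ Real.sqrt (1+ε) / 2 * ((m:ℝ) ^ υ * (Real.sqrt m)⁻¹) * 1 := by
                have : (0:ℝ) ≤ Real.sqrt (1+ε) / 2 * ((m:ℝ) ^ υ * (Real.sqrt m)⁻¹) := by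
                  have := Real.rpow_nonneg (le_of_lt hm0) υ
                  positivity
                exact mul_le_mul_of_nonneg_left h3 this
            _ = Real.sqrt (1+ε) / 2 * ((m:ℝ) ^ υ * (Real.sqrt m)⁻¹) := by ring
            _ ≤ Real.sqrt (1+ε) / 2 * ((M:ℝ) ^ υ * (Real.sqrt m)⁻¹) := by
                have hs2 : (0:ℝ) ≤ Real.sqrt (1+ε) / 2 := by positivity
                exact mul_le_mul_of_nonneg_left
                  (mul_le_mul_of_nonneg_right h2 hsm0) hs2
      have hMυ0 : (0:ℝ) ≤ (M:ℝ) ^ υ := Real.rpow_nonneg (le_of_lt hMpos) υ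
      calc ∑ m ∈ Finset.range (M+1), Hfun υ ε m
          ≤ ∑ m ∈ Finset.range (M+1),
              Real.sqrt (1+ε) / 2 * ((M:ℝ) ^ υ * (Real.sqrt m)⁻¹) :=
            Finset.sum_le_sum hpt
        _ = Real.sqrt (1+ε) / 2 * (M:ℝ) ^ υ *
              ∑ m ∈ Finset.range (M+1), (Real.sqrt m)⁻¹ := by
            rw [Finset.mul_sum]
            exact Finset.sum_congr rfl (fun m _ => by ring)
        _ ≤ Real.sqrt (1+ε) / 2 * (M:ℝ) ^ υ * (2 * Real.sqrt M) := by
            have : (0:ℝ) ≤ Real.sqrt (1+ε) / 2 * (M:ℝ) ^ υ := by positivity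
            exact mul_le_mul_of_nonneg_left (sum_inv_sqrt_le M) this
        _ = Real.sqrt (1+ε) * ((M:ℝ) ^ υ * Real.sqrt M) := by ring
        _ = Real.sqrt (1+ε) * (M:ℝ) ^ ((1:ℝ)/2 + υ) := by
            rw [Real.sqrt_eq_rpow (M:ℝ), ← Real.rpow_add hMpos]
            rw [show υ + 1/2 = (1:ℝ)/2 + υ by ring]
        _ ≤ Real.sqrt (1+ε) * ((3/2) * ε⁻¹) ^ ((1:ℝ)/2 + υ) := by
            exact mul_le_mul_of_nonneg_left
              (Real.rpow_le_rpow (le_of_lt hMpos) hM32 (by linarith)) hs0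
        _ ≤ Real.sqrt (1+ε) * (3/2) * ε ^ (-((1:ℝ)/2 + υ)) := by
            rw [Real.mul_rpow (by norm_num) (le_of_lt hεi0),
              Real.inv_rpow (le_of_lt hε0), ← Real.rpow_neg (le_of_lt hε0)]
            have h5 : ((3:ℝ)/2) ^ ((1:ℝ)/2 + υ) ≤ 3/2 := by
              have := Real.rpow_le_rpow_of_exponent_le
                (show (1:ℝ) ≤ 3/2 by norm_num) (show (1:ℝ)/2 + υ ≤ 1 by linarith)
              rwa [Real.rpow_one] at this
            have h6 : (0:ℝ) ≤ ε ^ (-((1:ℝ)/2 + υ)) := le_of_lt hX0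
            calc Real.sqrt (1+ε) * (((3:ℝ)/2) ^ ((1:ℝ)/2 + υ) * ε ^ (-((1:ℝ)/2 + υ)))
                ≤ Real.sqrt (1+ε) * ((3/2) * ε ^ (-((1:ℝ)/2 + υ))) :=
                  mul_le_mul_of_nonneg_left (mul_le_mul_of_nonneg_right h5 h6) hs0
              _ = Real.sqrt (1+ε) * (3/2) * ε ^ (-((1:ℝ)/2 + υ)) := by ring
    -- tail bound
    have tail : ∑' n : ℕ, Hfun υ ε (n + (M+1))
        ≤ Real.sqrt (1+ε) / 4 * ε ^ (-((1:ℝ)/2 + υ)) := by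
      have hMrp0 : (0:ℝ) ≤ (M:ℝ) ^ (υ - 1/2) := Real.rpow_nonneg (le_of_lt hMpos) _
      have hpt : ∀ n : ℕ, Hfun υ ε (n + (M+1))
          ≤ (Real.sqrt (1+ε) / 2 * (M:ℝ) ^ (υ - 1/2) * ((1+ε)⁻¹) ^ (M+1)) * ((1+ε)⁻¹) ^ n := by
        intro n
        have hbase : (M:ℝ) ≤ ((n + (M+1) : ℕ) : ℝ) := by push_cast; linarith [Nat.cast_nonneg (α := ℝ) n]
        have h2 : ((n + (M+1) : ℕ) : ℝ) ^ (υ - 1/2) ≤ (M:ℝ) ^ (υ - 1/2) :=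
          Real.rpow_le_rpow_of_nonpos hMpos hbase (by linarith)
        have e1 : ((1+ε)⁻¹ : ℝ) ^ (n + (M+1)) = ((1+ε)⁻¹) ^ (M+1) * ((1+ε)⁻¹) ^ n := by
          rw [pow_add]; ring
        calc Hfun υ ε (n + (M+1))
            = Real.sqrt (1+ε) / 2 * ((n + (M+1) : ℕ) : ℝ) ^ (υ - 1/2) *
                ((1+ε)⁻¹) ^ (n + (M+1)) := rfl
          _ ≤ Real.sqrt (1+ε) / 2 * (M:ℝ) ^ (υ - 1/2) * ((1+ε)⁻¹) ^ (n + (M+1)) := by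
              have : (0:ℝ) ≤ ((1+ε)⁻¹ : ℝ) ^ (n + (M+1)) := by positivity
              refine mul_le_mul_of_nonneg_right ?_ this
              exact mul_le_mul_of_nonneg_left h2 (by positivity)
          _ = (Real.sqrt (1+ε) / 2 * (M:ℝ) ^ (υ - 1/2) * ((1+ε)⁻¹) ^ (M+1)) *
                ((1+ε)⁻¹) ^ n := by rw [e1]; ring
      have hSumL : Summable (fun n : ℕ => Hfun υ ε (n + (M+1))) :=
        (summable_nat_add_iff (M+1)).mpr hSumH
      have hSumR : Summable (fun n : ℕ =>
          (Real.sqrt (1+ε) / 2 * (M:ℝ) ^ (υ - 1/2) * ((1+ε)⁻¹) ^ (M+1)) * ((1+ε)⁻¹) ^ n) :=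
        hgeom.mul_left _
      have step : ∑' n : ℕ, Hfun υ ε (n + (M+1))
          ≤ Real.sqrt (1+ε) / 2 * (M:ℝ) ^ (υ - 1/2) * (((1+ε)⁻¹) ^ M * ε⁻¹) := by
        calc ∑' n : ℕ, Hfun υ ε (n + (M+1))
            ≤ ∑' n : ℕ, (Real.sqrt (1+ε) / 2 * (M:ℝ) ^ (υ - 1/2) * ((1+ε)⁻¹) ^ (M+1))
                * ((1+ε)⁻¹) ^ n := Summable.tsum_le_tsum hpt hSumL hSumR
          _ = (Real.sqrt (1+ε) / 2 * (M:ℝ) ^ (υ - 1/2) * ((1+ε)⁻¹) ^ (M+1)) *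
                (1 - (1+ε)⁻¹)⁻¹ := by
              rw [tsum_mul_left, tsum_geometric_of_lt_one hr0 hr1]
          _ = Real.sqrt (1+ε) / 2 * (M:ℝ) ^ (υ - 1/2) * (((1+ε)⁻¹) ^ M * ε⁻¹) := by
              have h2 : (1 - (1+ε)⁻¹)⁻¹ = (1+ε) * ε⁻¹ := by
                rw [show 1 - (1+ε)⁻¹ = ε / (1+ε) by field_simp; ring, inv_div]
                ring
              rw [h2, pow_succ]
              field_simp
      have hMpow : (M:ℝ) ^ (υ - 1/2) ≤ ε ^ ((1:ℝ)/2 - υ) := by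
        have h2 : (M:ℝ) ^ (υ - 1/2) ≤ (ε⁻¹) ^ (υ - 1/2) :=
          Real.rpow_le_rpow_of_nonpos hεi0 hM1 (by linarith)
        have h3 : (ε⁻¹ : ℝ) ^ (υ - 1/2) = ε ^ ((1:ℝ)/2 - υ) := by
          rw [Real.inv_rpow (le_of_lt hε0), ← Real.rpow_neg (le_of_lt hε0)]
          congr 1
          ring
        rwa [h3] at h2
      have hrM : ((1+ε)⁻¹ : ℝ) ^ M ≤ 1/2 := by
        have h2 : (2:ℝ) ≤ (1+ε) ^ M := by
          have := one_add_mul_le_pow (show (-2:ℝ) ≤ ε by linarith) M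
          nlinarith
        have h3 : ((1+ε)⁻¹ : ℝ) ^ M * (1+ε) ^ M = 1 := by
          rw [← mul_pow, inv_mul_cancel₀ (ne_of_gt h1), one_pow]
        nlinarith [pow_nonneg hr0 M]
      have hεp2 : (0:ℝ) ≤ ε ^ ((1:ℝ)/2 - υ) := Real.rpow_nonneg (le_of_lt hε0) _
      calc ∑' n : ℕ, Hfun υ ε (n + (M+1))
          ≤ Real.sqrt (1+ε) / 2 * (M:ℝ) ^ (υ - 1/2) * (((1+ε)⁻¹) ^ M * ε⁻¹) := step
        _ ≤ Real.sqrt (1+ε) / 2 * ε ^ ((1:ℝ)/2 - υ) * ((1/2) * ε⁻¹) := by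
            have hc0 : (0:ℝ) ≤ Real.sqrt (1+ε) / 2 := by positivity
            have hεinv0 : (0:ℝ) ≤ ε⁻¹ := le_of_lt hεi0
            have t1 : Real.sqrt (1+ε) / 2 * (M:ℝ) ^ (υ - 1/2)
                ≤ Real.sqrt (1+ε) / 2 * ε ^ ((1:ℝ)/2 - υ) :=
              mul_le_mul_of_nonneg_left hMpow hc0
            have t2 : ((1+ε)⁻¹ : ℝ) ^ M * ε⁻¹ ≤ (1/2) * ε⁻¹ :=
              mul_le_mul_of_nonneg_right hrM hεinv0
            exact mul_le_mul t1 t2 (by positivity) (by positivity)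
        _ = Real.sqrt (1+ε) / 4 * (ε ^ ((1:ℝ)/2 - υ) * ε⁻¹) := by ring
        _ = Real.sqrt (1+ε) / 4 * ε ^ (-((1:ℝ)/2 + υ)) := by
            rw [eps_exp_split υ ε hε0]
    -- combine
    calc ∑ m ∈ Finset.range (M+1), Hfun υ ε m + ∑' n : ℕ, Hfun υ ε (n + (M+1))
        ≤ Real.sqrt (1+ε) * (3/2) * ε ^ (-((1:ℝ)/2 + υ))
          + Real.sqrt (1+ε) / 4 * ε ^ (-((1:ℝ)/2 + υ)) := add_le_add head tail
      _ = Real.sqrt (1+ε) * (7/4) * ε ^ (-((1:ℝ)/2 + υ)) := by ring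
      _ ≤ 2 * Real.sqrt Real.pi * ε ^ (-((1:ℝ)/2 + υ)) := by
          have : Real.sqrt (1+ε) * (7/4) ≤ 2 * Real.sqrt Real.pi := by nlinarith
          exact mul_le_mul_of_nonneg_right this (le_of_lt hX0)

lemma tsum_Gfun_le (υ ε : ℝ) (hυ0 : 0 ≤ υ) (hυ1 : υ < 1/2) (hε0 : 0 < ε) (hε3 : ε ≤ 3) :
    ∑' m : ℕ, Gfun υ ε m ≤ 2 * Real.sqrt Real.pi * ε ^ (-((1:ℝ)/2 + υ)) :=
  le_trans (Summable.tsum_le_tsum (Gfun_le_Hfun υ ε hυ0 hυ1 hε0)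
    (summable_Gfun υ ε hυ0 hυ1 hε0) (summable_Hfun υ ε hυ1 hε0))
    (tsum_Hfun_le υ ε hυ0 hυ1 hε0 hε3)

lemma pow_apply_norm_le' {E : Type*} [NormedAddCommGroup E] [NormedSpace ℂ E]
    (S : E →L[ℂ] E) (hS : ‖S‖ ≤ 1) (m : ℕ) : ∀ v : E, ‖(S ^ m) v‖ ≤ ‖v‖ := by
  induction m with
  | zero => intro v; simp
  | succ n ih =>
    intro v
    rw [pow_succ, ContinuousLinearMap.mul_apply]
    calc ‖(S ^ n) (S v)‖ ≤ ‖S v‖ := ih (S v)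
      _ ≤ ‖S‖ * ‖v‖ := S.le_opNorm v
      _ ≤ 1 * ‖v‖ := mul_le_mul_of_nonneg_right hS (norm_nonneg v)
      _ = ‖v‖ := one_mul _

lemma coef_norm (υ ε : ℝ) (hε : 0 < ε) (m : ℕ) :
    ‖((binomHalf m * (-1 : ℝ) ^ m * (1 + ε) ^ ((1 : ℝ) / 2 - (m : ℝ)) : ℝ) : ℂ)‖
      = |binomHalf m| * (1 + ε) ^ ((1 : ℝ) / 2 - (m : ℝ)) := by
  have h1 : (0:ℝ) < 1 + ε := by linarith
  rw [Complex.norm_real, Real.norm_eq_abs, abs_mul, abs_mul, abs_pow, abs_neg, abs_one,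
    one_pow, mul_one, abs_of_pos (Real.rpow_pos_of_pos h1 _)]

lemma summable_coef_smul {E : Type*} [NormedAddCommGroup E] [NormedSpace ℂ E]
    (S : E →L[ℂ] E) (hS : ‖S‖ ≤ 1) (u : E) (υ ε : ℝ) (hε : 0 < ε) :
    Summable (fun m : ℕ =>
      ‖((binomHalf m * (-1 : ℝ) ^ m * (1 + ε) ^ ((1 : ℝ) / 2 - (m : ℝ)) : ℝ) : ℂ)
        • ((S ^ m) u)‖) := by
  have h1 : (0:ℝ) < 1 + ε := by linarith
  have hr0 : (0:ℝ) ≤ (1+ε)⁻¹ := by positivity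
  have hr1 : (1+ε)⁻¹ < 1 := by rw [inv_lt_one_iff₀]; right; linarith
  refine Summable.of_nonneg_of_le (fun m => norm_nonneg _) (fun m => ?_)
    (((summable_geometric_of_lt_one hr0 hr1).mul_left (Real.sqrt (1+ε))).mul_right ‖u‖)
  rw [norm_smul, coef_norm υ ε hε]
  calc |binomHalf m| * (1 + ε) ^ ((1 : ℝ) / 2 - (m : ℝ)) * ‖(S ^ m) u‖
      ≤ 1 * (1 + ε) ^ ((1 : ℝ) / 2 - (m : ℝ)) * ‖u‖ := by
        have hp := Real.rpow_pos_of_pos h1 ((1 : ℝ) / 2 - (m : ℝ))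
        exact mul_le_mul (mul_le_mul (abs_binomHalf_le_one m) (le_refl _) (le_of_lt hp)
          zero_le_one) (pow_apply_norm_le' S hS m u) (norm_nonneg _)
          (by positivity)
      _ = Real.sqrt (1+ε) * ((1+ε)⁻¹) ^ m * ‖u‖ := by
        rw [one_mul, rpow_split ε hε]

/-- The binomial series for `√((1+ε)·I - X)` applied to `u`. -/
noncomputable def sqrtPerturbedSeries {E : Type*} [NormedAddCommGroup E]
    [NormedSpace ℂ E] (ε : ℝ) (X : E →L[ℂ] E) (u : E) : E :=
  ∑' m : ℕ, ((binomHalf m * (-1 : ℝ) ^ m * (1 + ε) ^ ((1 : ℝ) / 2 - (m : ℝ)) : ℝ) : ℂ)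
    • ((X ^ m) u)

/-- Deterministic core of the consistency of the square root of the ε-perturbed
graph Laplacian: the polynomially weighted power consistency
`‖Sᵐu - Tᵐu‖ ≤ m^{1+υ}δ` between two contractions is transferred to the binomial
series for `√((1+ε)I - ·)` at the cost of a factor `2√π ε^{-(1/2+υ)}`. -/
theorem sqrt_perturbed_consistency
    {E : Type*} [NormedAddCommGroup E] [NormedSpace ℂ E] [CompleteSpace E]
    (S T : E →L[ℂ] E) (hS : ‖S‖ ≤ 1) (hT : ‖T‖ ≤ 1)
    (u : E) (δ : ℝ) (hδ : 0 ≤ δ)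
    (υ : ℝ) (hυ0 : 0 ≤ υ) (hυ1 : υ < 1 / 2)
    (ε : ℝ) (hε0 : 0 < ε) (hε3 : ε ≤ 3)
    (hpow : ∀ m : ℕ, 1 ≤ m → ‖(S ^ m) u - (T ^ m) u‖ ≤ (m : ℝ) ^ (1 + υ) * δ) :
    Summable (fun m : ℕ =>
      ‖((binomHalf m * (-1 : ℝ) ^ m * (1 + ε) ^ ((1 : ℝ) / 2 - (m : ℝ)) : ℝ) : ℂ)
        • ((S ^ m) u)‖) ∧
    Summable (fun m : ℕ =>
      ‖((binomHalf m * (-1 : ℝ) ^ m * (1 + ε) ^ ((1 : ℝ) / 2 - (m : ℝ)) : ℝ) : ℂ)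
        • ((T ^ m) u)‖) ∧
    ‖sqrtPerturbedSeries ε S u - sqrtPerturbedSeries ε T u‖
      ≤ 2 * Real.sqrt Real.pi * ε ^ (-(1 / 2 + υ)) * δ := by
  have hSsum := summable_coef_smul S hS u υ ε hε0
  have hTsum := summable_coef_smul T hT u υ ε hε0
  refine ⟨hSsum, hTsum, ?_⟩
  set c : ℕ → ℂ := fun m =>
    ((binomHalf m * (-1 : ℝ) ^ m * (1 + ε) ^ ((1 : ℝ) / 2 - (m : ℝ)) : ℝ) : ℂ) with hc
  have hA : Summable (fun m : ℕ => c m • ((S ^ m) u)) := Summable.of_norm hSsum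
  have hB : Summable (fun m : ℕ => c m • ((T ^ m) u)) := Summable.of_norm hTsum
  have hdiff : sqrtPerturbedSeries ε S u - sqrtPerturbedSeries ε T u
      = ∑' m : ℕ, c m • ((S ^ m) u - (T ^ m) u) := by
    rw [sqrtPerturbedSeries, sqrtPerturbedSeries, ← Summable.tsum_sub hA hB]
    exact tsum_congr fun m => (smul_sub (c m) _ _).symm
  have hnsum : Summable (fun m : ℕ => ‖c m • ((S ^ m) u - (T ^ m) u)‖) := by
    refine Summable.of_nonneg_of_le (fun m => norm_nonneg _) (fun m => ?_) (hSsum.add hTsum)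
    calc ‖c m • ((S ^ m) u - (T ^ m) u)‖
        = ‖c m • ((S ^ m) u) - c m • ((T ^ m) u)‖ := by rw [smul_sub]
      _ ≤ ‖c m • ((S ^ m) u)‖ + ‖c m • ((T ^ m) u)‖ := norm_sub_le _ _
  have hptG : ∀ m : ℕ, ‖c m • ((S ^ m) u - (T ^ m) u)‖ ≤ Gfun υ ε m * δ := by
    intro m
    rcases Nat.eq_zero_or_pos m with h0 | hm
    · subst h0
      have : (1:ℝ) + υ ≠ 0 := by linarith
      simp [Gfun, Real.zero_rpow this]
    · rw [norm_smul, hc, coef_norm υ ε hε0]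
      have hK0 : (0:ℝ) ≤ |binomHalf m| * (1 + ε) ^ ((1 : ℝ) / 2 - (m : ℝ)) := by
        have := Real.rpow_pos_of_pos (show (0:ℝ) < 1 + ε by linarith) ((1:ℝ)/2 - (m:ℝ))
        positivity
      calc |binomHalf m| * (1 + ε) ^ ((1 : ℝ) / 2 - (m : ℝ)) * ‖(S ^ m) u - (T ^ m) u‖
          ≤ |binomHalf m| * (1 + ε) ^ ((1 : ℝ) / 2 - (m : ℝ)) * ((m : ℝ) ^ (1 + υ) * δ) :=
            mul_le_mul_of_nonneg_left (hpow m hm) hK0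
        _ = Gfun υ ε m * δ := by rw [Gfun]; ring
  have hGsum : Summable (fun m : ℕ => Gfun υ ε m * δ) :=
    (summable_Gfun υ ε hυ0 hυ1 hε0).mul_right δ
  calc ‖sqrtPerturbedSeries ε S u - sqrtPerturbedSeries ε T u‖
      = ‖∑' m : ℕ, c m • ((S ^ m) u - (T ^ m) u)‖ := by rw [hdiff]
    _ ≤ ∑' m : ℕ, ‖c m • ((S ^ m) u - (T ^ m) u)‖ := norm_tsum_le_tsum_norm hnsum
    _ ≤ ∑' m : ℕ, Gfun υ ε m * δ := Summable.tsum_le_tsum hptG hnsum hGsum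
    _ = (∑' m : ℕ, Gfun υ ε m) * δ := tsum_mul_right
    _ ≤ 2 * Real.sqrt Real.pi * ε ^ (-(1 / 2 + υ)) * δ :=
        mul_le_mul_of_nonneg_right (tsum_Gfun_le υ ε hυ0 hυ1 hε0 hε3) hδ
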